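/- Symmetrization of feasible off-blocks (from the proof of Theorem 4.3): let Δ = !![0, 1; -1, 0] and J = (Complex.I / 2) • Matrix.fromBlocks Δ 0 0 (−Δ) as a complex 4×4 matrix. Let ν, ν' be real numbers with 1/2 ≤ ν ≤ ν' and let X be a real 2×2 matrix such that both (Matrix.fromBlocks (ν' • 1) X Xᵀ (ν • 1), coerced to a complex 4×4 matrix) + J and the same matrix − J are positive semidefinite. Then the same two positive semidefiniteness conditions hold with X replaced by ((X 0 0 + X 1 1) / 2) • 1. -/

import Mathlib

open Matrix
open scoped ComplexOrder

noncomputable section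

/-- The single-mode symplectic form `Δ = !![0, 1; -1, 0]`. -/
def Δsymp : Matrix (Fin 2) (Fin 2) ℝ := !![0, 1; -1, 0]

/-- The matrix `J = (i/2) • fromBlocks Δ 0 0 (−Δ)` appearing in the uncertainty
relation for couplings of single-mode states. -/
def Jmat : Matrix (Fin 2 ⊕ Fin 2) (Fin 2 ⊕ Fin 2) ℂ :=
  (Complex.I / 2) • (Matrix.fromBlocks Δsymp 0 0 (-Δsymp)).map Complex.ofReal

lemma posSemidef_realSmul {n : Type*} [Fintype n] {c : ℝ} (hc : 0 ≤ c)
    {M : Matrix n n ℂ} (hM : M.PosSemidef) : ((c : ℂ) • M).PosSemidef := by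
  constructor
  · simp [Matrix.IsHermitian, Matrix.conjTranspose_smul, hM.1.eq, Complex.star_def,
      Complex.conj_ofReal]
  · exact (hM.smul (a := (c : ℂ)) (by exact_mod_cast hc)).2

set_option maxHeartbeats 1600000 in
/-- **Symmetrization of feasible off-blocks** (from the proof of Theorem 4.3). -/
theorem off_block_symmetrization (ν ν' : ℝ) (hν : 1 / 2 ≤ ν) (hνν' : ν ≤ ν')
    (X : Matrix (Fin 2) (Fin 2) ℝ)
    (hplus : ((Matrix.fromBlocks (ν' • 1) X Xᵀ (ν • 1)).map Complex.ofReal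
        + Jmat).PosSemidef)
    (hminus : ((Matrix.fromBlocks (ν' • 1) X Xᵀ (ν • 1)).map Complex.ofReal
        - Jmat).PosSemidef) :
    ((Matrix.fromBlocks (ν' • 1) (((X 0 0 + X 1 1) / 2) • 1)
        ((((X 0 0 + X 1 1) / 2) • 1 : Matrix (Fin 2) (Fin 2) ℝ))ᵀ (ν • 1)).map Complex.ofReal
        + Jmat).PosSemidef ∧
    ((Matrix.fromBlocks (ν' • 1) (((X 0 0 + X 1 1) / 2) • 1)
        ((((X 0 0 + X 1 1) / 2) • 1 : Matrix (Fin 2) (Fin 2) ℝ))ᵀ (ν • 1)).map Complex.ofReal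
        - Jmat).PosSemidef := by
  set A : Matrix (Fin 2 ⊕ Fin 2) (Fin 2 ⊕ Fin 2) ℂ :=
    (Matrix.fromBlocks (ν' • 1) X Xᵀ (ν • 1)).map Complex.ofReal with hA
  set U1 : Matrix (Fin 2 ⊕ Fin 2) (Fin 2 ⊕ Fin 2) ℂ :=
    (Matrix.fromBlocks Δsymp 0 0 Δsymp).map Complex.ofReal with hU1
  set U2 : Matrix (Fin 2 ⊕ Fin 2) (Fin 2 ⊕ Fin 2) ℂ :=
    (Matrix.fromBlocks !![1,0;0,-1] 0 0 !![1,0;0,-1]).map Complex.ofReal with hU2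
  have key₁ : ((Matrix.fromBlocks (ν' • 1) (((X 0 0 + X 1 1) / 2) • 1)
        ((((X 0 0 + X 1 1) / 2) • 1 : Matrix (Fin 2) (Fin 2) ℝ))ᵀ (ν • 1)).map Complex.ofReal
        + Jmat)
      = ((1/4 : ℝ) : ℂ) • ((A + Jmat) + U1ᴴ * (A + Jmat) * U1 + U2ᴴ * (A - Jmat) * U2
          + (U1 * U2)ᴴ * (A - Jmat) * (U1 * U2)) := by
    ext i j
    rcases i with i | i <;> rcases j with j | j <;> fin_cases i <;> fin_cases j <;>
      simp [hA, hU1, hU2, Matrix.mul_apply, Fintype.sum_sum_type, Fin.sum_univ_two,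
        Matrix.conjTranspose_apply, Jmat, Δsymp, Matrix.one_apply, Complex.star_def,
        Complex.conj_ofReal, Complex.ext_iff] <;> ring
  have key₂ : ((Matrix.fromBlocks (ν' • 1) (((X 0 0 + X 1 1) / 2) • 1)
        ((((X 0 0 + X 1 1) / 2) • 1 : Matrix (Fin 2) (Fin 2) ℝ))ᵀ (ν • 1)).map Complex.ofReal
        - Jmat)
      = ((1/4 : ℝ) : ℂ) • ((A - Jmat) + U1ᴴ * (A - Jmat) * U1 + U2ᴴ * (A + Jmat) * U2
          + (U1 * U2)ᴴ * (A + Jmat) * (U1 * U2)) := by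
    ext i j
    rcases i with i | i <;> rcases j with j | j <;> fin_cases i <;> fin_cases j <;>
      simp [hA, hU1, hU2, Matrix.mul_apply, Fintype.sum_sum_type, Fin.sum_univ_two,
        Matrix.conjTranspose_apply, Jmat, Δsymp, Matrix.one_apply, Complex.star_def,
        Complex.conj_ofReal, Complex.ext_iff] <;> ring
  constructor
  · rw [key₁]
    exact posSemidef_realSmul (by norm_num)
      ((((hplus.add (hplus.conjTranspose_mul_mul_same U1)).add
        (hminus.conjTranspose_mul_mul_same U2)).add
        (hminus.conjTranspose_mul_mul_same (U1 * U2))))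
  · rw [key₂]
    exact posSemidef_realSmul (by norm_num)
      ((((hminus.add (hminus.conjTranspose_mul_mul_same U1)).add
        (hplus.conjTranspose_mul_mul_same U2)).add
        (hplus.conjTranspose_mul_mul_same (U1 * U2))))
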